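/- arXiv:1004.3524 — 3 statements merged into one kernel-verified Lean document; each statement's English description precedes it below -/
import Mathlib

section
/- Let G be a finite simple undirected graph, let g be a finite simple graph, and let k ≥ 1. Then the number of closed walks of length k in G whose underlying simple graph is isomorphic to g equals ω_g^(k) · F(g, G), where ω_g^(k) is the number of closed walks of length k in g that visit every vertex and every edge of g, and F(g, G) is the number of subgraphs of G isomorphic to g. Consequently, the k-th spectral moment of G satisfies m_k(A_G) = (1/n) Σ_{g ∈ I_k} ω_g^(k) F(g, G), where I_k is the set of isomorphism classes of underlying simple graphs of closed walks of length k. -/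
open SimpleGraph

/-- The number `ω_g^(k)` of closed walks of length `k` in a simple graph `g` that visit
every vertex and traverse every edge of `g` (i.e. whose underlying simple graph is all
of `g`). -/
noncomputable def spanningClosedWalkCount {U : Type*} (g : SimpleGraph U) (k : ℕ) : ℕ :=
  Nat.card {p : (u : U) × g.Walk u u // p.2.length = k ∧ p.2.toSubgraph = ⊤}

/-- The embedding frequency `F(g, G)`: the number of subgraphs of `G` isomorphic to `g`. -/
noncomputable def embeddingFreq {U V : Type*} (g : SimpleGraph U) (G : SimpleGraph V) : ℕ :=
  Nat.card {h : G.Subgraph // Nonempty (h.coe ≃g g)}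

namespace MomentsAux

variable {V : Type*} {G : SimpleGraph V}

/-- Lift a walk into a subgraph containing it. -/
def liftWalk (h : G.Subgraph) : ∀ {u v : V} (w : G.Walk u v),
    w.toSubgraph ≤ h → ∀ (hu : u ∈ h.verts) (hv : v ∈ h.verts),
    h.coe.Walk ⟨u, hu⟩ ⟨v, hv⟩
  | _, _, .nil, _, _, _ => .nil
  | _, _, @SimpleGraph.Walk.cons _ _ u b _ a p, hw, hu, hv =>
    have hadj : h.Adj u b := (le_trans le_sup_left hw).2 (by simp)
    .cons (by exact hadj) (liftWalk h p (le_trans le_sup_right hw) hadj.snd_mem hv)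

lemma map_liftWalk (h : G.Subgraph) : ∀ {u v : V} (w : G.Walk u v)
    (hw : w.toSubgraph ≤ h) (hu : u ∈ h.verts) (hv : v ∈ h.verts),
    (liftWalk h w hw hu hv).map h.hom = w
  | _, _, .nil, _, _, _ => rfl
  | _, _, .cons a p, hw, hu, hv => by
    rw [liftWalk]
    erw [Walk.map_cons]
    congr 1
    exact map_liftWalk h p _ _ _

/-- The sigma-level map on closed walks induced by a graph hom. -/
def sigmaWalkMap {A B : Type*} {H : SimpleGraph A} {K : SimpleGraph B} (f : H →g K)
    (p : (a : A) × H.Walk a a) : (b : B) × K.Walk b b :=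
  ⟨f p.1, p.2.map f⟩

lemma sigmaWalkMap_injective {A B : Type*} {H : SimpleGraph A} {K : SimpleGraph B}
    {f : H →g K} (hf : Function.Injective f) :
    Function.Injective (sigmaWalkMap f) := by
  rintro ⟨a, p⟩ ⟨b, q⟩ hpq
  simp only [sigmaWalkMap] at hpq
  obtain ⟨h1, h2⟩ := Sigma.ext_iff.mp hpq
  have hab := hf h1
  subst hab
  rw [heq_eq_eq] at h2
  exact congrArg _ (Walk.map_injective_of_injective hf a a h2)

lemma map_iso_top {A B : Type*} {H : SimpleGraph A} {K : SimpleGraph B} (e : H ≃g K) :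
    (⊤ : H.Subgraph).map e.toHom = ⊤ := by
  refine Subgraph.ext ?_ ?_
  · simp [Subgraph.map, Set.image_univ, e.toEquiv.range_eq_univ]
  · ext u v
    simp only [Subgraph.map_adj, Subgraph.top_adj, Relation.Map]
    constructor
    · rintro ⟨a, b, hab, rfl, rfl⟩
      exact e.map_adj_iff.2 hab
    · intro huv
      exact ⟨e.symm u, e.symm v, e.symm.map_adj_iff.2 huv, e.apply_symm_apply u,
        e.apply_symm_apply v⟩

lemma coeSubgraph_top (h : G.Subgraph) : (⊤ : h.coe.Subgraph).map h.hom = h := by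
  refine Subgraph.ext ?_ ?_
  · simp [Subgraph.map, Set.image_univ, Subtype.range_coe]
  · ext u v
    simp only [Subgraph.map_adj, Subgraph.top_adj, Relation.Map]
    constructor
    · rintro ⟨a, b, hab, rfl, rfl⟩
      exact hab
    · intro huv
      exact ⟨⟨u, huv.fst_mem⟩, ⟨v, huv.snd_mem⟩, huv, rfl, rfl⟩

lemma finite_walkSubtype {A : Type*} [Finite A] (H : SimpleGraph A) (k : ℕ)
    (Q : ((a : A) × H.Walk a a) → Prop) :
    Finite {p : (a : A) × H.Walk a a // p.2.length = k ∧ Q p} := by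
  classical
  have : Fintype A := Fintype.ofFinite A
  apply Finite.of_injective
    (fun p => (⟨p.1.1, ⟨p.1.2, p.2.1⟩⟩ : (a : A) × {w : H.Walk a a // w.length = k}))
  rintro ⟨⟨v, w⟩, hw⟩ ⟨⟨v', w'⟩, hw'⟩ hh
  obtain ⟨h1, h2⟩ := Sigma.ext_iff.mp hh
  dsimp at h1 h2
  subst h1
  rw [heq_eq_eq, Subtype.mk.injEq] at h2
  exact Subtype.ext (Sigma.ext rfl (heq_of_eq h2))

instance finite_subgraph [Finite V] : Finite G.Subgraph := by
  apply Finite.of_injective (fun h => (h.verts, h.Adj))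
  rintro h h' hh
  simp only [Prod.mk.injEq] at hh
  exact Subgraph.ext hh.1 hh.2

lemma card_eq_of_inj_inj {α β : Type*} [Finite α] [Finite β] (f : α → β) (g : β → α)
    (hf : Function.Injective f) (hg : Function.Injective g) : Nat.card α = Nat.card β :=
  le_antisymm (Nat.card_le_card_of_injective f hf) (Nat.card_le_card_of_injective g hg)

/-- L2: spanning closed walk counts are invariant under isomorphism (≤ direction). -/
lemma spanningCount_le {A B : Type*} [Finite A] [Finite B] {H : SimpleGraph A}
    {g : SimpleGraph B} (e : H ≃g g) (k : ℕ) :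
    spanningClosedWalkCount H k ≤ spanningClosedWalkCount g k := by
  haveI := finite_walkSubtype g k (fun p => p.2.toSubgraph = ⊤)
  apply Nat.card_le_card_of_injective
    (Subtype.map (sigmaWalkMap e.toHom) ?_)
    (Subtype.map_injective _ (sigmaWalkMap_injective (e.toEquiv.injective)))
  rintro ⟨a, p⟩ ⟨hlen, htop⟩
  refine ⟨?_, ?_⟩
  · simpa [sigmaWalkMap] using hlen
  · show (p.map e.toHom).toSubgraph = ⊤
    rw [Walk.toSubgraph_map, htop, map_iso_top]

lemma spanningCount_eq {A B : Type*} [Finite A] [Finite B] {H : SimpleGraph A}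
    {g : SimpleGraph B} (e : H ≃g g) (k : ℕ) :
    spanningClosedWalkCount H k = spanningClosedWalkCount g k :=
  le_antisymm (spanningCount_le e k) (spanningCount_le e.symm k)

/-- L1: walks in `G` with a fixed `toSubgraph = h` are counted by spanning walks in `h.coe`. -/
lemma card_walks_fixed_subgraph {V : Type*} [Finite V] {G : SimpleGraph V}
    (h : G.Subgraph) (k : ℕ) :
    Nat.card {p : (v : V) × G.Walk v v // p.2.length = k ∧ p.2.toSubgraph = h}
      = spanningClosedWalkCount h.coe k := by
  haveI := finite_walkSubtype G k (fun p => p.2.toSubgraph = h)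
  haveI := finite_walkSubtype h.coe k (fun p => p.2.toSubgraph = ⊤)
  have hprop : ∀ p : (a : ↥h.verts) × h.coe.Walk a a,
      (p.2.length = k ∧ p.2.toSubgraph = ⊤) →
      ((sigmaWalkMap h.hom p).2.length = k ∧ (sigmaWalkMap h.hom p).2.toSubgraph = h) := by
    rintro ⟨a, p⟩ ⟨hlen, htop⟩
    refine ⟨?_, ?_⟩
    · show (p.map h.hom).length = k
      rw [Walk.length_map]; exact hlen
    · show (p.map h.hom).toSubgraph = h
      rw [Walk.toSubgraph_map, htop, coeSubgraph_top]
  have hmem : ∀ p : {p : (v : V) × G.Walk v v // p.2.length = k ∧ p.2.toSubgraph = h},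
      p.1.1 ∈ h.verts := fun p => by
    have := p.1.2.start_mem_verts_toSubgraph
    rwa [p.2.2] at this
  refine card_eq_of_inj_inj
    (fun p => ⟨⟨⟨p.1.1, hmem p⟩, liftWalk h p.1.2 (le_of_eq p.2.2) (hmem p) (hmem p)⟩, ?_, ?_⟩)
    (Subtype.map (sigmaWalkMap h.hom) hprop) ?_ ?_
  · show (liftWalk h p.1.2 _ _ _).length = k
    have := congrArg Walk.length (map_liftWalk h p.1.2 (le_of_eq p.2.2) (hmem p) (hmem p))
    rw [Walk.length_map] at this
    exact this.trans p.2.1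
  · show (liftWalk h p.1.2 _ _ _).toSubgraph = ⊤
    apply Subgraph.coeSubgraph_injective h
    show Subgraph.map h.hom _ = Subgraph.map h.hom ⊤
    rw [← Walk.toSubgraph_map, map_liftWalk, coeSubgraph_top]
    exact p.2.2
  · -- lift map injective
    rintro ⟨⟨v, w⟩, hw⟩ ⟨⟨v', w'⟩, hw'⟩ hh
    have hval := congrArg Subtype.val hh
    have := congrArg (sigmaWalkMap h.hom) hval
    simp only [sigmaWalkMap, map_liftWalk] at this
    exact Subtype.ext this
  · exact Subtype.map_injective _ (sigmaWalkMap_injective (fun a b => Subtype.ext))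

lemma nat_card_sigma {ι : Type*} [Fintype ι] (f : ι → Type*) [∀ i, Finite (f i)] :
    Nat.card ((i : ι) × f i) = ∑ i, Nat.card (f i) := by
  haveI := fun i => Fintype.ofFinite (f i)
  rw [Nat.card_eq_fintype_card, Fintype.card_sigma]
  simp [Nat.card_eq_fintype_card]

lemma card_walks_iso {V U : Type*} [Finite V] [Finite U] (G : SimpleGraph V)
    (g : SimpleGraph U) (k : ℕ) :
    Nat.card {p : (v : V) × G.Walk v v //
        p.2.length = k ∧ Nonempty (p.2.toSubgraph.coe ≃g g)}
      = spanningClosedWalkCount g k * embeddingFreq g G := by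
  classical
  haveI := finite_walkSubtype G k (fun p => Nonempty (p.2.toSubgraph.coe ≃g g))
  haveI : Fintype {h : G.Subgraph // Nonempty (h.coe ≃g g)} := Fintype.ofFinite _
  set T := {h : G.Subgraph // Nonempty (h.coe ≃g g)} with hT
  set S := {p : (v : V) × G.Walk v v //
      p.2.length = k ∧ Nonempty (p.2.toSubgraph.coe ≃g g)} with hS
  let F : S → T := fun s => ⟨s.1.2.toSubgraph, s.2.2⟩
  have e1 : S ≃ (t : T) × {s : S // F s = t} := (Equiv.sigmaFiberEquiv F).symm
  rw [Nat.card_congr e1, nat_card_sigma]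
  have key : ∀ t : T, Nat.card {s : S // F s = t} = spanningClosedWalkCount g k := by
    intro t
    have e2 : {s : S // F s = t} ≃
        {p : (v : V) × G.Walk v v // p.2.length = k ∧ p.2.toSubgraph = t.1} := by
      refine (Equiv.subtypeEquivRight
          (q := fun s : S => s.1.2.toSubgraph = t.1) ?_).trans
        ((Equiv.subtypeSubtypeEquivSubtypeInter
            (fun p : (v : V) × G.Walk v v =>
              p.2.length = k ∧ Nonempty (p.2.toSubgraph.coe ≃g g))
            (fun p => p.2.toSubgraph = t.1)).trans (Equiv.subtypeEquivRight ?_))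
      · intro s
        exact Subtype.ext_iff
      · intro p
        constructor
        · rintro ⟨⟨hl, _⟩, he⟩; exact ⟨hl, he⟩
        · rintro ⟨hl, he⟩
          exact ⟨⟨hl, by rw [he]; exact t.2⟩, he⟩
    rw [Nat.card_congr e2, card_walks_fixed_subgraph t.1 k,
      spanningCount_eq t.2.some k]
  simp only [key, Finset.sum_const, Finset.card_univ, smul_eq_mul]
  rw [embeddingFreq, Nat.card_eq_fintype_card, mul_comm]


lemma finite_walkSubtype' {A : Type*} [Finite A] (H : SimpleGraph A) (k : ℕ) :
    Finite {p : (a : A) × H.Walk a a // p.2.length = k} := by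
  haveI := finite_walkSubtype H k (fun _ => True)
  refine Finite.of_injective
    (fun p => (⟨p.1, p.2, trivial⟩ :
      {p : (a : A) × H.Walk a a // p.2.length = k ∧ True})) ?_
  intro p q h
  simp only [Subtype.mk.injEq] at h
  exact Subtype.ext h

end MomentsAux

open MomentsAux in
/-- For a finite simple graph `G` on `n` vertices, a finite simple graph
`g`, and `k ≥ 1`: the number of closed walks of length `k` in `G` whose underlying simple
graph is isomorphic to `g` equals `ω_g^(k) · F(g, G)`.  Consequently, if
`(reps i)_{i ∈ ι}` is a system of pairwise non-isomorphic representatives of the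
isomorphism classes `I_k` of underlying simple graphs of closed walks of length `k`
in `G`, then `m_k(A_G) = (1/n) Σ_{g ∈ I_k} ω_g^(k) F(g, G)`. -/
theorem moments_from_motifs
    {V U ι : Type*} [Fintype V] [DecidableEq V] [Fintype U] [Fintype ι]
    (G : SimpleGraph V) [DecidableRel G.Adj] (g : SimpleGraph U) (k : ℕ) (hk : 1 ≤ k)
    (reps : ι → Σ m : ℕ, SimpleGraph (Fin m))
    (hdistinct : ∀ i j : ι, Nonempty ((reps i).2 ≃g (reps j).2) → i = j)
    (hcover : ∀ (v : V) (w : G.Walk v v), w.length = k →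
      ∃ i : ι, Nonempty (w.toSubgraph.coe ≃g (reps i).2)) :
    Nat.card {p : (v : V) × G.Walk v v //
        p.2.length = k ∧ Nonempty (p.2.toSubgraph.coe ≃g g)}
      = spanningClosedWalkCount g k * embeddingFreq g G
    ∧ (Fintype.card V : ℝ)⁻¹ * Matrix.trace (G.adjMatrix ℝ ^ k)
      = (Fintype.card V : ℝ)⁻¹
        * ∑ i : ι, (spanningClosedWalkCount (reps i).2 k * embeddingFreq (reps i).2 G : ℝ) := by
  classical
  refine ⟨card_walks_iso G g k, ?_⟩
  congr 1
  haveI := finite_walkSubtype' G k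
  set S := {p : (v : V) × G.Walk v v // p.2.length = k} with hS
  let c : S → ι := fun p => (hcover p.1.1 p.1.2 p.2).choose
  have hcspec : ∀ p : S, Nonempty (p.1.2.toSubgraph.coe ≃g (reps (c p)).2) :=
    fun p => (hcover p.1.1 p.1.2 p.2).choose_spec
  have h1 : Matrix.trace (G.adjMatrix ℝ ^ k) = (Nat.card S : ℝ) := by
    have e : S ≃ (v : V) × {w : G.Walk v v // w.length = k} :=
      { toFun := fun p => ⟨p.1.1, p.1.2, p.2⟩
        invFun := fun q => ⟨⟨q.1, q.2.1⟩, q.2.2⟩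
        left_inv := fun p => rfl
        right_inv := fun q => rfl }
    rw [Nat.card_congr e, Nat.card_eq_fintype_card, Fintype.card_sigma, Matrix.trace]
    push_cast
    refine Finset.sum_congr rfl fun v _ => ?_
    rw [Matrix.diag_apply, adjMatrix_pow_apply_eq_card_walk]
    rfl
  have h2 : Nat.card S = ∑ i : ι,
      spanningClosedWalkCount (reps i).2 k * embeddingFreq (reps i).2 G := by
    rw [Nat.card_congr (Equiv.sigmaFiberEquiv c).symm, nat_card_sigma]
    refine Finset.sum_congr rfl fun i _ => ?_
    have e2 : {p : S // c p = i} ≃ {p : (v : V) × G.Walk v v //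
        p.2.length = k ∧ Nonempty (p.2.toSubgraph.coe ≃g (reps i).2)} := by
      refine (Equiv.subtypeEquivRight
          (q := fun p : S => Nonempty (p.1.2.toSubgraph.coe ≃g (reps i).2)) ?_).trans
        (Equiv.subtypeSubtypeEquivSubtypeInter
          (fun p : (v : V) × G.Walk v v => p.2.length = k)
          (fun p => Nonempty (p.2.toSubgraph.coe ≃g (reps i).2)))
      intro p
      constructor
      · rintro rfl
        exact hcspec p
      · rintro ⟨e⟩
        exact hdistinct (c p) i ⟨((hcspec p).some.symm.trans e)⟩
    rw [Nat.card_congr e2]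
    exact card_walks_iso G (reps i).2 k
  rw [h1, h2]
  push_cast
  rfl
end

section
/- Let G be a finite simple undirected graph. Let Υ_G be the number of subgraphs of G isomorphic to the paw graph (a triangle with one pendant edge), let Δ_G be the total number of triangles in G, and for each vertex i let Δ_G^(i) be the number of triangles of G containing i and d_i its degree. Then Υ_G = Σ_{i ∈ V(G)} (d_i − 2) Δ_G^(i) = C_{Δd} − 6Δ_G, where C_{Δd} = Σ_{i ∈ V(G)} d_i Δ_G^(i) is the clustering–degree correlation coefficient. -/
open SimpleGraph

/-- The paw graph: a triangle on `{0, 1, 2}` together with one additional pendant edge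
`{2, 3}` attached to one of its vertices. -/
def pawGraph : SimpleGraph (Fin 4) :=
  SimpleGraph.fromRel (fun i j =>
    (i = 0 ∧ j = 1) ∨ (i = 0 ∧ j = 2) ∨ (i = 1 ∧ j = 2) ∨ (i = 2 ∧ j = 3))

/-- `Δ_G^(i)`: the number of triangles of `G` containing the vertex `i`. -/
def trianglesAt {V : Type*} [Fintype V] [DecidableEq V]
    (G : SimpleGraph V) [DecidableRel G.Adj] (i : V) : ℕ :=
  ((G.cliqueFinset 3).filter (fun s => i ∈ s)).card

section Aux

open Finset

variable {V : Type*} [Fintype V] [DecidableEq V] (G : SimpleGraph V) [DecidableRel G.Adj]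

def pawSub (p : Finset V × V × V) : G.Subgraph where
  verts := ↑p.1 ∪ {p.2.1, p.2.2}
  Adj x y := ((x ∈ p.1 ∧ y ∈ p.1 ∧ x ≠ y) ∨ (x = p.2.1 ∧ y = p.2.2) ∨ (x = p.2.2 ∧ y = p.2.1))
    ∧ G.Adj x y
  adj_sub h := h.2
  edge_vert := by
    rintro x y ⟨(⟨hx, -, -⟩ | ⟨rfl, -⟩ | ⟨rfl, -⟩), -⟩ <;> simp_all
  symm := by
    constructor
    rintro x y ⟨(⟨hx, hy, hne⟩ | ⟨rfl, rfl⟩ | ⟨rfl, rfl⟩), ha⟩ <;>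
      exact ⟨by tauto, ha.symm⟩

lemma pawSub_adj_iff {a b c d x y : V} (hab : G.Adj a b) (hac : G.Adj a c) (hbc : G.Adj b c)
    (hcd : G.Adj c d) (hd : d ∉ ({a, b, c} : Finset V)) :
    (pawSub G ({a, b, c}, c, d)).Adj x y ↔
      ((x = a ∧ y = b) ∨ (x = b ∧ y = a) ∨ (x = a ∧ y = c) ∨ (x = c ∧ y = a) ∨
       (x = b ∧ y = c) ∨ (x = c ∧ y = b) ∨ (x = c ∧ y = d) ∨ (x = d ∧ y = c)) := by
  simp only [pawSub, mem_insert, mem_singleton] at *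
  push_neg at hd
  constructor
  · rintro ⟨(⟨hx, hy, hne⟩ | ⟨rfl, rfl⟩ | ⟨rfl, rfl⟩), hA⟩
    · rcases hx with rfl | rfl | rfl <;> rcases hy with rfl | rfl | rfl
      · exact absurd rfl hne
      · exact Or.inl ⟨rfl, rfl⟩
      · exact Or.inr (Or.inr (Or.inl ⟨rfl, rfl⟩))
      · exact Or.inr (Or.inl ⟨rfl, rfl⟩)
      · exact absurd rfl hne
      · exact Or.inr (Or.inr (Or.inr (Or.inr (Or.inl ⟨rfl, rfl⟩))))
      · exact Or.inr (Or.inr (Or.inr (Or.inl ⟨rfl, rfl⟩)))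
      · exact Or.inr (Or.inr (Or.inr (Or.inr (Or.inr (Or.inl ⟨rfl, rfl⟩)))))
      · exact absurd rfl hne
    · exact Or.inr (Or.inr (Or.inr (Or.inr (Or.inr (Or.inr (Or.inl ⟨rfl, rfl⟩))))))
    · exact Or.inr (Or.inr (Or.inr (Or.inr (Or.inr (Or.inr (Or.inr ⟨rfl, rfl⟩))))))
  · rintro (⟨rfl, rfl⟩ | ⟨rfl, rfl⟩ | ⟨rfl, rfl⟩ | ⟨rfl, rfl⟩ | ⟨rfl, rfl⟩ | ⟨rfl, rfl⟩ |
      ⟨rfl, rfl⟩ | ⟨rfl, rfl⟩)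
    · exact ⟨Or.inl ⟨Or.inl rfl, Or.inr (Or.inl rfl), hab.ne⟩, hab⟩
    · exact ⟨Or.inl ⟨Or.inr (Or.inl rfl), Or.inl rfl, hab.ne'⟩, hab.symm⟩
    · exact ⟨Or.inl ⟨Or.inl rfl, Or.inr (Or.inr rfl), hac.ne⟩, hac⟩
    · exact ⟨Or.inl ⟨Or.inr (Or.inr rfl), Or.inl rfl, hac.ne'⟩, hac.symm⟩
    · exact ⟨Or.inl ⟨Or.inr (Or.inl rfl), Or.inr (Or.inr rfl), hbc.ne⟩, hbc⟩
    · exact ⟨Or.inl ⟨Or.inr (Or.inr rfl), Or.inr (Or.inl rfl), hbc.ne'⟩, hbc.symm⟩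
    · exact ⟨Or.inr (Or.inl ⟨rfl, rfl⟩), hcd⟩
    · exact ⟨Or.inr (Or.inr ⟨rfl, rfl⟩), hcd.symm⟩

instance : DecidableRel pawGraph.Adj := fun i j =>
  decidable_of_iff _ (SimpleGraph.fromRel_adj _ i j).symm

lemma pawSub_verts (a b c d : V) :
    (pawSub G ({a, b, c}, c, d)).verts = {a, b, c, d} := by
  ext x
  simp [pawSub]
  tauto

lemma pawSub_iso_aux {a b c d : V} (hab : G.Adj a b) (hac : G.Adj a c) (hbc : G.Adj b c)
    (hcd : G.Adj c d) (hd : d ∉ ({a, b, c} : Finset V)) :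
    Nonempty ((pawSub G ({a, b, c}, c, d)).coe ≃g pawGraph) := by
  have hW := pawSub_verts G a b c d
  have hda : d ≠ a := by simp at hd; tauto
  have hdb : d ≠ b := by simp at hd; tauto
  have hdc : d ≠ c := by simp at hd; tauto
  have ha : a ∈ (pawSub G ({a, b, c}, c, d)).verts := by rw [hW]; simp
  have hb : b ∈ (pawSub G ({a, b, c}, c, d)).verts := by rw [hW]; simp
  have hc : c ∈ (pawSub G ({a, b, c}, c, d)).verts := by rw [hW]; simp
  have hdd : d ∈ (pawSub G ({a, b, c}, c, d)).verts := by rw [hW]; simp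
  have hmem : ∀ x : (pawSub G ({a, b, c}, c, d)).verts,
      x = ⟨a, ha⟩ ∨ x = ⟨b, hb⟩ ∨ x = ⟨c, hc⟩ ∨ x = ⟨d, hdd⟩ := by
    rintro ⟨x, hx⟩
    have hx' := hx
    rw [hW] at hx'
    simp only [Subtype.ext_iff]
    simpa using hx'
  refine ⟨⟨⟨fun x => if x.val = a then 0 else if x.val = b then 1 else if x.val = c then 2 else 3,
    fun i => ![⟨a, ha⟩, ⟨b, hb⟩, ⟨c, hc⟩, ⟨d, hdd⟩] i, ?_, ?_⟩, ?_⟩⟩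
  · intro x
    rcases hmem x with rfl | rfl | rfl | rfl <;>
      simp [hab.ne, hac.ne, hbc.ne, hab.ne', hac.ne', hbc.ne', hda, hdb, hdc]
  · intro i
    fin_cases i <;>
      simp [hab.ne, hac.ne, hbc.ne, hab.ne', hac.ne', hbc.ne', hda, hdb, hdc]
  · intro x y
    simp only [Equiv.coe_fn_mk, Subgraph.coe_adj]
    rw [pawSub_adj_iff G hab hac hbc hcd hd]
    rcases hmem x with rfl | rfl | rfl | rfl <;>
      rcases hmem y with rfl | rfl | rfl | rfl <;>
      simp [hab.ne, hac.ne, hbc.ne, hab.ne', hac.ne', hbc.ne', hda, hdb, hdc,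
        hda.symm, hdb.symm, hdc.symm, pawGraph] <;> decide

def pawPred (p : Finset V × V × V) : Prop :=
  p.1 ∈ G.cliqueFinset 3 ∧ p.2.1 ∈ p.1 ∧ G.Adj p.2.1 p.2.2 ∧ p.2.2 ∉ p.1

lemma iso_eq_pawSub (h : G.Subgraph) (e : h.coe ≃g pawGraph) :
    ∃ p, pawPred G p ∧ h = pawSub G p := by
  set a : V := (e.symm 0).val with ha'
  set b : V := (e.symm 1).val with hb'
  set c : V := (e.symm 2).val with hc'
  set d : V := (e.symm 3).val with hd'
  have key : ∀ i j : Fin 4, h.Adj (e.symm i).val (e.symm j).val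
      ↔ pawGraph.Adj i j := by
    intro i j
    rw [← Subgraph.coe_adj, ← e.symm.map_rel_iff]
  have inj : ∀ i j : Fin 4, (e.symm i).val = (e.symm j).val → i = j := by
    intro i j hij
    exact e.symm.injective (Subtype.ext hij)
  have hfin : ∀ i : Fin 4, i = 0 ∨ i = 1 ∨ i = 2 ∨ i = 3 := by decide
  have hab : G.Adj a b := h.adj_sub ((key 0 1).mpr (by decide))
  have hac : G.Adj a c := h.adj_sub ((key 0 2).mpr (by decide))
  have hbc : G.Adj b c := h.adj_sub ((key 1 2).mpr (by decide))
  have hcd : G.Adj c d := h.adj_sub ((key 2 3).mpr (by decide))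
  have hd : d ∉ ({a, b, c} : Finset V) := by
    simp only [Finset.mem_insert, Finset.mem_singleton]
    rintro (hx | hx | hx)
    · exact absurd (inj 3 0 hx) (by decide)
    · exact absurd (inj 3 1 hx) (by decide)
    · exact absurd (inj 3 2 hx) (by decide)
  refine ⟨({a, b, c}, c, d), ⟨?_, by simp, hcd, hd⟩, ?_⟩
  · rw [mem_cliqueFinset_iff]
    exact is3Clique_triple_iff.mpr ⟨hab, hac, hbc⟩
  · have hmem : ∀ x ∈ h.verts, x = a ∨ x = b ∨ x = c ∨ x = d := by
      intro x hx
      have h1 : (⟨x, hx⟩ : h.verts) = e.symm (e ⟨x, hx⟩) := (e.symm_apply_apply _).symm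
      rcases hfin (e ⟨x, hx⟩) with h2 | h2 | h2 | h2 <;> rw [h2] at h1
      · exact Or.inl (congrArg Subtype.val h1)
      · exact Or.inr (Or.inl (congrArg Subtype.val h1))
      · exact Or.inr (Or.inr (Or.inl (congrArg Subtype.val h1)))
      · exact Or.inr (Or.inr (Or.inr (congrArg Subtype.val h1)))
    apply Subgraph.ext
    · rw [pawSub_verts]
      ext x
      constructor
      · intro hx
        rcases hmem x hx with rfl | rfl | rfl | rfl <;> simp
      · intro hx
        rcases hx with rfl | rfl | rfl | rfl
        · exact (e.symm 0).2
        · exact (e.symm 1).2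
        · exact (e.symm 2).2
        · exact (e.symm 3).2
    · ext x y
      constructor
      · intro hxy
        have hx := h.edge_vert hxy
        have hy := h.edge_vert hxy.symm
        rw [pawSub_adj_iff G hab hac hbc hcd hd]
        rcases hmem x hx with rfl | rfl | rfl | rfl <;>
          rcases hmem y hy with rfl | rfl | rfl | rfl
        · exact absurd ((key 0 0).mp hxy) (by decide)
        · exact Or.inl ⟨rfl, rfl⟩
        · exact Or.inr (Or.inr (Or.inl ⟨rfl, rfl⟩))
        · exact absurd ((key 0 3).mp hxy) (by decide)
        · exact Or.inr (Or.inl ⟨rfl, rfl⟩)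
        · exact absurd ((key 1 1).mp hxy) (by decide)
        · exact Or.inr (Or.inr (Or.inr (Or.inr (Or.inl ⟨rfl, rfl⟩))))
        · exact absurd ((key 1 3).mp hxy) (by decide)
        · exact Or.inr (Or.inr (Or.inr (Or.inl ⟨rfl, rfl⟩)))
        · exact Or.inr (Or.inr (Or.inr (Or.inr (Or.inr (Or.inl ⟨rfl, rfl⟩)))))
        · exact absurd ((key 2 2).mp hxy) (by decide)
        · exact Or.inr (Or.inr (Or.inr (Or.inr (Or.inr (Or.inr (Or.inl ⟨rfl, rfl⟩))))))
        · exact absurd ((key 3 0).mp hxy) (by decide)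
        · exact absurd ((key 3 1).mp hxy) (by decide)
        · exact Or.inr (Or.inr (Or.inr (Or.inr (Or.inr (Or.inr (Or.inr ⟨rfl, rfl⟩))))))
        · exact absurd ((key 3 3).mp hxy) (by decide)
      · rw [pawSub_adj_iff G hab hac hbc hcd hd]
        rintro (⟨rfl, rfl⟩ | ⟨rfl, rfl⟩ | ⟨rfl, rfl⟩ | ⟨rfl, rfl⟩ | ⟨rfl, rfl⟩ | ⟨rfl, rfl⟩ |
          ⟨rfl, rfl⟩ | ⟨rfl, rfl⟩)
        · exact (key 0 1).mpr (by decide)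
        · exact (key 1 0).mpr (by decide)
        · exact (key 0 2).mpr (by decide)
        · exact (key 2 0).mpr (by decide)
        · exact (key 1 2).mpr (by decide)
        · exact (key 2 1).mpr (by decide)
        · exact (key 2 3).mpr (by decide)
        · exact (key 3 2).mpr (by decide)

lemma triangle_mem {s : Finset V} (hs : s ∈ G.cliqueFinset 3) {c : V} (hc : c ∈ s) :
    ∃ a b, G.Adj a b ∧ G.Adj a c ∧ G.Adj b c ∧ s = {a, b, c} := by
  rw [mem_cliqueFinset_iff, is3Clique_iff] at hs
  obtain ⟨x, y, z, hxy, hxz, hyz, rfl⟩ := hs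
  simp only [mem_insert, mem_singleton] at hc
  rcases hc with rfl | rfl | rfl
  · exact ⟨y, z, hyz, hxy.symm, hxz.symm, by ext t; simp; tauto⟩
  · exact ⟨x, z, hxz, hxy, hyz.symm, by ext t; simp; tauto⟩
  · exact ⟨x, y, hxy, hxz, hyz, rfl⟩

lemma pawSub_iso {p : Finset V × V × V} (hp : pawPred G p) :
    Nonempty ((pawSub G p).coe ≃g pawGraph) := by
  obtain ⟨s, c, d⟩ := p
  obtain ⟨hs, hc, hcd, hd⟩ := hp
  dsimp only at hs hc hcd hd ⊢
  obtain ⟨a, b, hab, hac, hbc, rfl⟩ := triangle_mem G hs hc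
  exact pawSub_iso_aux G hab hac hbc hcd (by simpa using hd)

lemma pawSub_pendant {q : Finset V × V × V} (hq : pawPred G q) :
    ∀ y, (pawSub G q).Adj q.2.2 y → y = q.2.1 := by
  obtain ⟨s, c, d⟩ := q
  obtain ⟨hs, hc, hcd, hd⟩ := hq
  dsimp only at hs hc hcd hd ⊢
  obtain ⟨a, b, hab, hac, hbc, rfl⟩ := triangle_mem G hs hc
  intro y hy
  rw [pawSub_adj_iff G hab hac hbc hcd hd] at hy
  simp only [mem_insert, mem_singleton] at hd
  push_neg at hd
  rcases hy with h | h | h | h | h | h | h | h <;>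
    first | exact h.2 | (exfalso; exact hd.1 h.1) | (exfalso; exact hd.2.1 h.1) |
      (exfalso; exact hd.2.2 h.1)

lemma pawSub_injOn : Set.InjOn (pawSub G) {p | pawPred G p} := by
  rintro ⟨s, c, d⟩ hp ⟨s', c', d'⟩ hq heq
  obtain ⟨hs, hc, hcd, hd⟩ := hp
  obtain ⟨hs', hc', hcd', hd'⟩ := hq
  dsimp only at hs hc hcd hd hs' hc' hcd' hd' ⊢
  obtain ⟨a, b, hab, hac, hbc, rfl⟩ := triangle_mem G hs hc
  obtain ⟨a', b', hab', hac', hbc', rfl⟩ := triangle_mem G hs' hc'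
  have hverts := congrArg Subgraph.verts heq
  rw [pawSub_verts, pawSub_verts] at hverts
  -- d = d'
  have hdd : d = d' := by
    by_contra hne
    have hdmem : d ∈ ({a', b', c', d'} : Set V) := by rw [← hverts]; simp
    simp only [Set.mem_insert_iff, Set.mem_singleton_iff] at hdmem
    -- so d ∈ {a',b',c'}; then d has two distinct neighbors in pawSub q, but only one
    have pend : ∀ y, (pawSub G ({a, b, c}, c, d)).Adj d y → y = c :=
      pawSub_pendant G ⟨hs, hc, hcd, hd⟩
    have htwo : ∃ u v : V, u ≠ v ∧ (pawSub G ({a', b', c'}, c', d')).Adj d u ∧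
        (pawSub G ({a', b', c'}, c', d')).Adj d v := by
      rcases hdmem with rfl | rfl | rfl | rfl
      · exact ⟨b', c', hbc'.ne, (pawSub_adj_iff G hab' hac' hbc' hcd' hd').mpr
            (Or.inl ⟨rfl, rfl⟩),
          (pawSub_adj_iff G hab' hac' hbc' hcd' hd').mpr
            (Or.inr (Or.inr (Or.inl ⟨rfl, rfl⟩)))⟩
      · exact ⟨a', c', hac'.ne, (pawSub_adj_iff G hab' hac' hbc' hcd' hd').mpr
            (Or.inr (Or.inl ⟨rfl, rfl⟩)),
          (pawSub_adj_iff G hab' hac' hbc' hcd' hd').mpr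
            (Or.inr (Or.inr (Or.inr (Or.inr (Or.inl ⟨rfl, rfl⟩)))))⟩
      · exact ⟨a', b', hab'.ne, (pawSub_adj_iff G hab' hac' hbc' hcd' hd').mpr
            (Or.inr (Or.inr (Or.inr (Or.inl ⟨rfl, rfl⟩)))),
          (pawSub_adj_iff G hab' hac' hbc' hcd' hd').mpr
            (Or.inr (Or.inr (Or.inr (Or.inr (Or.inr (Or.inl ⟨rfl, rfl⟩))))))⟩
      · exact absurd rfl hne
    obtain ⟨u, v, huv, hu, hv⟩ := htwo
    rw [← heq] at hu hv
    exact huv ((pend u hu).trans (pend v hv).symm)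
  subst hdd
  -- c = c'
  have hcc : c = c' := by
    have h1 : (pawSub G ({a', b', c'}, c', d)).Adj d c := by
      rw [← heq]
      exact ((pawSub_adj_iff G hab hac hbc hcd hd).mpr
        (Or.inr (Or.inr (Or.inr (Or.inr (Or.inr (Or.inr (Or.inl ⟨rfl, rfl⟩)))))))).symm
    exact pawSub_pendant G ⟨hs', hc', hcd', hd'⟩ c h1
  subst hcc
  -- s = s'
  have hss : ({a, b, c} : Finset V) = {a', b', c} := by
    ext x
    constructor
    · intro hx
      have h1 : x ∈ ({a', b', c, d} : Set V) := by
        rw [← hverts]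
        simp only [mem_insert, mem_singleton] at hx
        simp only [Set.mem_insert_iff, Set.mem_singleton_iff]
        tauto
      simp only [Set.mem_insert_iff, Set.mem_singleton_iff] at h1
      simp only [mem_insert, mem_singleton]
      rcases h1 with rfl | rfl | rfl | rfl
      · tauto
      · tauto
      · tauto
      · exact absurd hx hd
    · intro hx
      have h1 : x ∈ ({a, b, c, d} : Set V) := by
        rw [hverts]
        simp only [mem_insert, mem_singleton] at hx
        simp only [Set.mem_insert_iff, Set.mem_singleton_iff]
        tauto
      simp only [Set.mem_insert_iff, Set.mem_singleton_iff] at h1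
      simp only [mem_insert, mem_singleton]
      rcases h1 with rfl | rfl | rfl | rfl
      · tauto
      · tauto
      · tauto
      · exact absurd hx hd'
  rw [hss]

instance : DecidablePred (pawPred G) := fun p => by unfold pawPred; infer_instance

lemma embeddingFreq_eq_card :
    embeddingFreq pawGraph G = (Finset.univ.filter (pawPred G)).card := by
  have hbij : Function.Bijective
      (fun p : {p // pawPred G p} =>
        (⟨pawSub G p.1, pawSub_iso G p.2⟩ :
          {h : G.Subgraph // Nonempty (h.coe ≃g pawGraph)})) := by
    constructor
    · rintro ⟨p, hp⟩ ⟨q, hq⟩ hpq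
      exact Subtype.ext (pawSub_injOn G hp hq (congrArg Subtype.val hpq))
    · rintro ⟨h, ⟨e⟩⟩
      obtain ⟨p, hp, rfl⟩ := iso_eq_pawSub G h e
      exact ⟨⟨p, hp⟩, rfl⟩
  rw [embeddingFreq, ← Nat.card_eq_of_bijective _ hbij, Nat.card_eq_fintype_card,
    Fintype.card_subtype]

lemma filter_card_eq_sum :
    ((Finset.univ.filter (pawPred G)).card : ℤ)
      = ∑ s ∈ G.cliqueFinset 3, ∑ c ∈ s, ((G.degree c : ℤ) - 2) := by
  have hset : Finset.univ.filter (pawPred G)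
      = (G.cliqueFinset 3).biUnion (fun s => s.biUnion
          (fun c => (G.neighborFinset c \ s).image (fun d => (s, c, d)))) := by
    ext ⟨s, c, d⟩
    simp only [mem_filter, mem_univ, true_and, mem_biUnion, mem_image, mem_sdiff,
      mem_neighborFinset, Prod.mk.injEq, pawPred]
    constructor
    · rintro ⟨h1, h2, h3, h4⟩
      exact ⟨s, h1, c, h2, d, ⟨h3, h4⟩, rfl, rfl, rfl⟩
    · rintro ⟨s', h1, c', h2, d', ⟨h3, h4⟩, rfl, rfl, rfl⟩
      exact ⟨h1, h2, h3, h4⟩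
  rw [hset, card_biUnion, Nat.cast_sum]
  · refine Finset.sum_congr rfl fun s hs => ?_
    rw [card_biUnion, Nat.cast_sum]
    · refine Finset.sum_congr rfl fun c hc => ?_
      have hinj : Function.Injective (fun d : V => (s, c, d)) := fun d d' hdd =>
        congrArg (fun p : Finset V × V × V => p.2.2) hdd
      rw [Finset.card_image_of_injective _ hinj]
      -- the neighbors of c inside s
      have hint : G.neighborFinset c ∩ s = s.erase c := by
        ext x
        simp only [mem_inter, mem_neighborFinset, mem_erase]
        obtain ⟨a, b, hab, hac, hbc, rfl⟩ := triangle_mem G hs hc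
        constructor
        · rintro ⟨h1, h2⟩
          exact ⟨fun hx => G.irrefl (hx ▸ h1), h2⟩
        · rintro ⟨h1, h2⟩
          refine ⟨?_, h2⟩
          simp only [mem_insert, mem_singleton] at h2
          rcases h2 with rfl | rfl | rfl
          · exact hac.symm
          · exact hbc.symm
          · exact absurd rfl h1
      have h2 : (s.erase c).card = 2 := by
        rw [Finset.card_erase_of_mem hc]
        rw [mem_cliqueFinset_iff] at hs
        rw [hs.card_eq]
      have h3 := Finset.card_sdiff_add_card_inter (G.neighborFinset c) s
      rw [hint, h2] at h3
      have h4 := G.card_neighborFinset_eq_degree c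
      omega
    · -- inner disjointness
      intro c hc c' hc' hne
      simp only [Finset.disjoint_left, mem_image]
      rintro p ⟨d, hd, rfl⟩ ⟨d', hd', hp⟩
      exact hne (congrArg (fun p : Finset V × V × V => p.2.1) hp).symm
  · -- outer disjointness
    intro s hs s' hs' hne
    simp only [Finset.disjoint_left, mem_biUnion, mem_image]
    rintro p ⟨c, hc, d, hd, rfl⟩ ⟨c', hc', d', hd', hp⟩
    exact hne (congrArg (fun p : Finset V × V × V => p.1) hp).symm

lemma sum_swap_tri (f : V → ℤ) :
    ∑ s ∈ G.cliqueFinset 3, ∑ c ∈ s, f c = ∑ c : V, f c * (trianglesAt G c : ℤ) := by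
  have h1 : ∀ s ∈ G.cliqueFinset 3, ∑ c ∈ s, f c = ∑ c : V, if c ∈ s then f c else 0 := by
    intro s _
    rw [Finset.sum_ite_mem, Finset.univ_inter]
  rw [Finset.sum_congr rfl h1, Finset.sum_comm]
  refine Finset.sum_congr rfl fun c _ => ?_
  rw [trianglesAt, ← Finset.sum_filter, Finset.sum_const, nsmul_eq_mul]
  push_cast
  ring

lemma sum_tri : ∑ c : V, (trianglesAt G c : ℤ) = 3 * ((G.cliqueFinset 3).card : ℤ) := by
  have := sum_swap_tri G (fun _ => 1)
  simp only [one_mul] at this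
  rw [← this]
  have h : ∀ s ∈ G.cliqueFinset 3, (∑ _c ∈ s, (1 : ℤ)) = 3 := fun s hs => by
    have hcard : s.card = 3 := (SimpleGraph.mem_cliqueFinset_iff.mp hs).card_eq
    rw [Finset.sum_const, hcard]
    norm_num
  rw [Finset.sum_congr rfl h, Finset.sum_const, nsmul_eq_mul]
  ring


end Aux

/-- For a finite simple graph `G`, the number `Υ_G` of paw subgraphs
satisfies `Υ_G = Σ_i (d_i − 2) Δ_G^(i) = C_{Δd} − 6 Δ_G`, where `d_i` is the degree of
vertex `i`, `Δ_G^(i)` the number of triangles containing `i`, `Δ_G` the total number of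
triangles, and `C_{Δd} = Σ_i d_i Δ_G^(i)` the clustering–degree correlation
coefficient. -/
theorem paw_count_from_triangles
    {V : Type*} [Fintype V] [DecidableEq V] (G : SimpleGraph V) [DecidableRel G.Adj] :
    (embeddingFreq pawGraph G : ℤ)
      = ∑ i : V, ((G.degree i : ℤ) - 2) * (trianglesAt G i : ℤ)
    ∧ (embeddingFreq pawGraph G : ℤ)
      = (∑ i : V, (G.degree i : ℤ) * (trianglesAt G i : ℤ))
        - 6 * ((G.cliqueFinset 3).card : ℤ) := by
  have h1 : (embeddingFreq pawGraph G : ℤ)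
      = ∑ i : V, ((G.degree i : ℤ) - 2) * (trianglesAt G i : ℤ) := by
    rw [embeddingFreq_eq_card, filter_card_eq_sum, sum_swap_tri]
  refine ⟨h1, ?_⟩
  rw [h1]
  have h2 := sum_tri G
  calc ∑ i : V, ((G.degree i : ℤ) - 2) * (trianglesAt G i : ℤ)
      = (∑ i : V, (G.degree i : ℤ) * (trianglesAt G i : ℤ))
        - 2 * ∑ i : V, (trianglesAt G i : ℤ) := by
        rw [Finset.mul_sum, ← Finset.sum_sub_distrib]
        refine Finset.sum_congr rfl fun i _ => by ring
    _ = _ := by rw [h2]; ring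
end

section
/- Let G be a finite simple undirected graph on n vertices with adjacency matrix A_G, let r ≥ 1, and let k be an integer with 1 ≤ k ≤ 2r + 1. For each vertex v, let G_r^v be the subgraph of G induced on N_r^v = {u : d(v,u) ≤ r}. For each subgraph h of G, let ω_k(h) be the number of closed walks of length k in h that visit every vertex and every edge of h, and let D_h^(r) = {u ∈ V(h) : h ⊆ G_r^u} be its detector set. Then the k-th spectral moment of G admits the decentralized decomposition m_k(A_G) = (1/n) Σ_{v ∈ V(G)} Σ_{h ⊆ G_r^v, v ∈ V(h)} ω_k(h) / |D_h^(r)|, where the inner sum runs over all subgraphs h of G_r^v containing v with ω_k(h) > 0 (for each such h the detector set is nonempty, so the ratio is well defined). -/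
open SimpleGraph

/-- A finite graph has only finitely many subgraphs. -/
instance subgraphFinite {V : Type*} [Finite V] {G : SimpleGraph V} : Finite G.Subgraph :=
  Finite.of_injective (fun h : G.Subgraph => (h.verts, h.Adj))
    (fun _ _ e => SimpleGraph.Subgraph.ext (congrArg Prod.fst e) (congrArg Prod.snd e))

/-- `G_r^v`: the subgraph of `G` induced on the `r`-th order neighborhood
`N_r^v = {u : d(v,u) ≤ r}` of `v` (the vertices reachable from `v` by a walk of
length at most `r`). -/
def ballSubgraph {V : Type*} (G : SimpleGraph V) (v : V) (r : ℕ) : G.Subgraph :=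
  (⊤ : G.Subgraph).induce {u | ∃ p : G.Walk v u, p.length ≤ r}

/-- The detector set `D_h^(r) = {u ∈ V(h) : h ⊆ G_r^u}` of a subgraph `h` of `G`. -/
def detectorSet {V : Type*} {G : SimpleGraph V} (h : G.Subgraph) (r : ℕ) : Set V :=
  {u | u ∈ h.verts ∧ h ≤ ballSubgraph G u r}

section Aux
variable {V : Type*} {G : SimpleGraph V}

lemma coeSubgraph_top' (h : G.Subgraph) :
    SimpleGraph.Subgraph.coeSubgraph (⊤ : h.coe.Subgraph) = h := by
  ext v w
  · simp [Subgraph.verts_coeSubgraph]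
  · rw [Subgraph.coeSubgraph_adj]
    simp only [Subgraph.top_adj, Subgraph.coe_adj]
    constructor
    · rintro ⟨hv, hw, hadj⟩; exact hadj
    · intro hadj; exact ⟨hadj.fst_mem, hadj.snd_mem, hadj⟩

/-- Lift a walk of `G` whose edges lie in `h` to a walk of `h.coe`. -/
def liftWalk {h : G.Subgraph} : ∀ {u v : V} (p : G.Walk u v)
    (hu : u ∈ h.verts) (hv : v ∈ h.verts)
    (he : ∀ e ∈ p.edges, e ∈ h.edgeSet), h.coe.Walk ⟨u, hu⟩ ⟨v, hv⟩
  | _, _, Walk.nil, _, _, _ => Walk.nil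
  | _, _, @Walk.cons _ _ a b c hab p, hu, hv, he =>
    have hadj : h.Adj a b := (Subgraph.mem_edgeSet).mp (he s(a, b) (by simp))
    Walk.cons (by exact hadj) (liftWalk p hadj.snd_mem hv fun e he' => he e (by simp [he']))

lemma liftWalk_map {h : G.Subgraph} {u v : V} (p : G.Walk u v)
    (hu : u ∈ h.verts) (hv : v ∈ h.verts) (he : ∀ e ∈ p.edges, e ∈ h.edgeSet) :
    (liftWalk p hu hv he).map h.hom = p := by
  induction p with
  | nil => rfl
  | cons a p ih => simp only [liftWalk, Walk.map_cons]; exact congrArg _ (ih _ _ _)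

lemma natCard_sigma' {β : Type*} [Fintype β] (g : β → Type*) [∀ b, Finite (g b)] :
    Nat.card (Σ b, g b) = ∑ b, Nat.card (g b) := by
  letI : ∀ b, Fintype (g b) := fun b => Fintype.ofFinite _
  simp_rw [Nat.card_eq_fintype_card]
  exact Fintype.card_sigma

lemma natCard_fiber_sum {α β : Type*} [Finite α] [Fintype β] (f : α → β) :
    Nat.card α = ∑ b, Nat.card {a // f a = b} := by
  rw [← Nat.card_congr (Equiv.sigmaFiberEquiv f)]
  exact natCard_sigma' _

/-- Closed walks in `G` of length `k` with edge-vertex set `h` are in bijection with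
spanning closed walks of `h.coe`. -/
lemma card_toSubgraph_fiber (h : G.Subgraph) (k : ℕ) :
    Nat.card {p : (u : V) × G.Walk u u // p.2.length = k ∧ p.2.toSubgraph = h}
      = spanningClosedWalkCount h.coe k := by
  refine (Nat.card_eq_of_bijective
    (fun q : {p : (u : ↥h.verts) × h.coe.Walk u u // p.2.length = k ∧ p.2.toSubgraph = ⊤} =>
      (⟨⟨(q.1.1 : V), q.1.2.map h.hom⟩,
        by exact (Walk.length_map _ _).trans q.2.1,
        by exact (Walk.toSubgraph_map _ _).trans (by rw [q.2.2]; exact coeSubgraph_top' h)⟩ :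
        {p : (u : V) × G.Walk u u // p.2.length = k ∧ p.2.toSubgraph = h})) ⟨?_, ?_⟩).symm
  · rintro ⟨⟨u₁, w₁⟩, hl₁, ht₁⟩ ⟨⟨u₂, w₂⟩, hl₂, ht₂⟩ heq
    have h1 := Subtype.ext_iff.mp heq
    have hu : u₁ = u₂ := Subtype.ext (congrArg Sigma.fst h1)
    subst hu
    have hw : w₁.map h.hom = w₂.map h.hom := eq_of_heq (Sigma.mk.inj_iff.mp h1).2
    have hw' : w₁ = w₂ :=
      Walk.map_injective_of_injective (f := h.hom) Subtype.val_injective _ _ hw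
    subst hw'
    rfl
  · rintro ⟨⟨u, p⟩, hl, ht⟩
    have hu : u ∈ h.verts := ht ▸ p.start_mem_verts_toSubgraph
    have he : ∀ e ∈ p.edges, e ∈ h.edgeSet := fun e hep => by
      rw [← ht]; exact p.mem_edges_toSubgraph.mpr hep
    refine ⟨⟨⟨⟨u, hu⟩, liftWalk p hu hu he⟩, ?_, ?_⟩, ?_⟩
    · have := congrArg Walk.length (liftWalk_map p hu hu he)
      rw [Walk.length_map] at this
      exact this.trans hl
    · apply Subgraph.coeSubgraph_injective h
      rw [coeSubgraph_top' h]
      show Subgraph.map h.hom _ = h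
      exact (Walk.toSubgraph_map _ _).symm.trans ((congrArg Walk.toSubgraph (liftWalk_map p hu hu he)).trans ht)
    · exact Subtype.ext (congrArg (Sigma.mk u) (liftWalk_map p hu hu he))

lemma exists_short_walk [DecidableEq V] {r : ℕ} {x u w : V} (c : G.Walk x x)
    (hc : c.length ≤ 2 * r + 1) (hu : u ∈ c.support) (hw : w ∈ c.support) :
    ∃ q : G.Walk u w, q.length ≤ r := by
  set c' : G.Walk u u := c.rotate u hu with hc'
  have hlen : c'.length = c.length := by
    rw [hc', Walk.rotate, Walk.length_append, add_comm, ← Walk.length_append, Walk.take_spec]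
  have hw' : w ∈ c'.support := by
    have h2 := Walk.toSubgraph_rotate c hu
    rw [← Walk.mem_verts_toSubgraph] at hw ⊢
    rw [hc', h2]; exact hw
  have hsum : (c'.takeUntil w hw').length + (c'.dropUntil w hw').length = c.length := by
    rw [← Walk.length_append, Walk.take_spec, hlen]
  by_cases hle : (c'.takeUntil w hw').length ≤ r
  · exact ⟨c'.takeUntil w hw', hle⟩
  · refine ⟨(c'.dropUntil w hw').reverse, ?_⟩
    rw [Walk.length_reverse]
    omega

lemma mem_detector_of_spanning [DecidableEq V] {h : G.Subgraph} {r k : ℕ}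
    (hk : k ≤ 2 * r + 1) (hpos : 0 < spanningClosedWalkCount h.coe k) :
    ∀ u ∈ h.verts, u ∈ detectorSet h r := by
  obtain ⟨⟨⟨⟨x, hx⟩, q⟩, hql, hqt⟩⟩ := (Nat.card_pos_iff.mp hpos).1
  set p : G.Walk x x := q.map h.hom with hp
  have hpt : p.toSubgraph = h := by
    rw [hp]; exact (Walk.toSubgraph_map _ _).trans (by rw [hqt]; exact coeSubgraph_top' h)
  have hplen : p.length = k := by rw [hp]; exact (Walk.length_map _ _).trans hql
  have hsupp : ∀ u ∈ h.verts, u ∈ p.support := fun u hu => by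
    rw [← Walk.mem_verts_toSubgraph, hpt]; exact hu
  intro u hu
  have hS : ∀ w ∈ h.verts, w ∈ {w | ∃ q : G.Walk u w, q.length ≤ r} := fun w hwv =>
    exists_short_walk p (by omega) (hsupp u hu) (hsupp w hwv)
  refine ⟨hu, ?_, ?_⟩
  · intro w hwv
    exact hS w hwv
  · intro a b hab
    rw [ballSubgraph, Subgraph.induce_adj]
    exact ⟨hS a (h.edge_vert hab), hS b (h.edge_vert hab.symm), by simpa using h.adj_sub hab⟩

end Aux

/-- For a finite simple graph `G` on `n` vertices, `r ≥ 1`, and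
`1 ≤ k ≤ 2r + 1`, the `k`-th spectral moment admits the decentralized decomposition
`m_k(A_G) = (1/n) Σ_{v} Σ_{h ⊆ G_r^v, v ∈ V(h), ω_k(h) > 0} ω_k(h) / |D_h^(r)|`;
moreover each such `h` has a nonempty detector set, so every ratio is well defined. -/
theorem decentralized_moment_computation
    {V : Type*} [Fintype V] [DecidableEq V] (G : SimpleGraph V) [DecidableRel G.Adj]
    (r k : ℕ) (hr : 1 ≤ r) (hk1 : 1 ≤ k) (hk2 : k ≤ 2 * r + 1) :
    (∀ (v : V) (h : G.Subgraph), h ≤ ballSubgraph G v r → v ∈ h.verts →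
        0 < spanningClosedWalkCount h.coe k → (detectorSet h r).Nonempty)
    ∧ (Fintype.card V : ℝ)⁻¹ * Matrix.trace (G.adjMatrix ℝ ^ k)
      = (Fintype.card V : ℝ)⁻¹
        * ∑ v : V,
            ∑ᶠ h : {h : G.Subgraph //
                h ≤ ballSubgraph G v r ∧ v ∈ h.verts ∧ 0 < spanningClosedWalkCount h.coe k},
              (spanningClosedWalkCount h.1.coe k : ℝ) / ((detectorSet h.1 r).ncard : ℝ) := by
  classical
  letI : Fintype G.Subgraph := Fintype.ofFinite _
  have hdet : ∀ h : G.Subgraph, 0 < spanningClosedWalkCount h.coe k → ∀ u ∈ h.verts, u ∈ detectorSet h r :=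
    fun h hp => mem_detector_of_spanning hk2 hp
  have hne : ∀ h : G.Subgraph, 0 < spanningClosedWalkCount h.coe k → (detectorSet h r).Nonempty := fun h hp => by
    obtain ⟨⟨⟨⟨x, hx⟩, q⟩, _⟩⟩ := (Nat.card_pos_iff.mp hp).1
    exact ⟨x, hdet h hp x hx⟩
  refine ⟨fun v h _ hv hp => ⟨v, hdet h hp v hv⟩, ?_⟩
  -- reduce to the trace identity
  have key : Matrix.trace (G.adjMatrix ℝ ^ k)
      = ∑ v : V,
          ∑ᶠ h : {h : G.Subgraph //
              h ≤ ballSubgraph G v r ∧ v ∈ h.verts ∧ 0 < spanningClosedWalkCount h.coe k},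
            (spanningClosedWalkCount h.1.coe k : ℝ) / ((detectorSet h.1 r).ncard : ℝ) := by
    -- LHS in terms of walk counts
    have lhs1 : Matrix.trace (G.adjMatrix ℝ ^ k)
        = ∑ v : V, (Nat.card {q : G.Walk v v // q.length = k} : ℝ) := by
      simp only [Matrix.trace, Matrix.diag]
      refine Finset.sum_congr rfl fun v _ => ?_
      rw [adjMatrix_pow_apply_eq_card_walk]
      congr 1
      rw [← Nat.card_eq_fintype_card]
      rfl
    -- the combinatorial chain, in ℕ
    letI hW : Finite {p : (u : V) × G.Walk u u // p.2.length = k} :=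
      Finite.of_equiv (Σ v : V, {q : G.Walk v v // q.length = k})
        ⟨fun x => ⟨⟨x.1, x.2.1⟩, x.2.2⟩, fun p => ⟨p.1.1, ⟨p.1.2, p.2⟩⟩,
          fun _ => rfl, fun _ => rfl⟩
    have chain : ∑ v : V, Nat.card {q : G.Walk v v // q.length = k}
        = ∑ h : G.Subgraph, spanningClosedWalkCount h.coe k := by
      have e1 : Nat.card {p : (u : V) × G.Walk u u // p.2.length = k}
          = ∑ v : V, Nat.card {q : G.Walk v v // q.length = k} := by
        rw [Nat.card_congr
          (⟨fun x => ⟨x.1.1, ⟨x.1.2, x.2⟩⟩, fun p => ⟨⟨p.1, p.2.1⟩, p.2.2⟩,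
            fun _ => rfl, fun _ => rfl⟩ :
            {p : (u : V) × G.Walk u u // p.2.length = k}
              ≃ Σ v : V, {q : G.Walk v v // q.length = k})]
        exact natCard_sigma' _
      have e2 : Nat.card {p : (u : V) × G.Walk u u // p.2.length = k}
          = ∑ h : G.Subgraph,
              Nat.card {p : {p : (u : V) × G.Walk u u // p.2.length = k} //
                p.1.2.toSubgraph = h} :=
        natCard_fiber_sum _
      have e3 : ∀ h : G.Subgraph,
          Nat.card {p : {p : (u : V) × G.Walk u u // p.2.length = k} //
            p.1.2.toSubgraph = h} = spanningClosedWalkCount h.coe k := fun h => by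
        rw [← card_toSubgraph_fiber h k]
        exact Nat.card_congr (Equiv.subtypeSubtypeEquivSubtypeInter
          (fun p : (u : V) × G.Walk u u => p.2.length = k)
          (fun p : (u : V) × G.Walk u u => p.2.toSubgraph = h))
      rw [← e1, e2]
      exact Finset.sum_congr rfl fun h _ => e3 h
    -- RHS in terms of an ordinary sum with indicators
    have rhs1 : ∀ v : V,
        (∑ᶠ h : {h : G.Subgraph //
            h ≤ ballSubgraph G v r ∧ v ∈ h.verts ∧ 0 < spanningClosedWalkCount h.coe k},
          (spanningClosedWalkCount h.1.coe k : ℝ) / ((detectorSet h.1 r).ncard : ℝ))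
        = ∑ h : G.Subgraph,
            if h ≤ ballSubgraph G v r ∧ v ∈ h.verts ∧ 0 < spanningClosedWalkCount h.coe k then
              (spanningClosedWalkCount h.coe k : ℝ) / ((detectorSet h r).ncard : ℝ) else 0 := fun v => by
      rw [finsum_eq_sum_of_fintype, ← Finset.sum_filter]
      exact (Finset.sum_subtype
        (p := fun h : G.Subgraph =>
          h ≤ ballSubgraph G v r ∧ v ∈ h.verts ∧ 0 < spanningClosedWalkCount h.coe k)
        (Finset.univ.filter fun h : G.Subgraph =>
          h ≤ ballSubgraph G v r ∧ v ∈ h.verts ∧ 0 < spanningClosedWalkCount h.coe k)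
        (fun x => by simp)
        (fun h : G.Subgraph =>
          (spanningClosedWalkCount h.coe k : ℝ) / ((detectorSet h r).ncard : ℝ))).symm
    calc Matrix.trace (G.adjMatrix ℝ ^ k)
        = ∑ v : V, (Nat.card {q : G.Walk v v // q.length = k} : ℝ) := lhs1
      _ = ((∑ v : V, Nat.card {q : G.Walk v v // q.length = k} : ℕ) : ℝ) := by
          push_cast; rfl
      _ = ((∑ h : G.Subgraph, spanningClosedWalkCount h.coe k : ℕ) : ℝ) := by rw [chain]
      _ = ∑ h : G.Subgraph, (spanningClosedWalkCount h.coe k : ℝ) := by push_cast; rfl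
      _ = ∑ h : G.Subgraph, ∑ v : V,
            (if h ≤ ballSubgraph G v r ∧ v ∈ h.verts ∧ 0 < spanningClosedWalkCount h.coe k then
              (spanningClosedWalkCount h.coe k : ℝ) / ((detectorSet h r).ncard : ℝ) else 0) := by
          refine Finset.sum_congr rfl fun h _ => ?_
          by_cases hp : 0 < spanningClosedWalkCount h.coe k
          · have hcond : ∀ v : V,
                (h ≤ ballSubgraph G v r ∧ v ∈ h.verts ∧ 0 < spanningClosedWalkCount h.coe k) ↔ v ∈ detectorSet h r := by
              intro v
              constructor
              · rintro ⟨h1, h2, _⟩; exact ⟨h2, h1⟩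
              · rintro ⟨h2, h1⟩; exact ⟨h1, h2, hp⟩
            have : ∑ v : V,
                (if h ≤ ballSubgraph G v r ∧ v ∈ h.verts ∧ 0 < spanningClosedWalkCount h.coe k then
                  (spanningClosedWalkCount h.coe k : ℝ) / ((detectorSet h r).ncard : ℝ) else 0)
                = ∑ v : V, (if v ∈ (detectorSet h r).toFinset then
                    (spanningClosedWalkCount h.coe k : ℝ) / ((detectorSet h r).ncard : ℝ) else 0) := by
              refine Finset.sum_congr rfl fun v _ => ?_
              simp only [Set.mem_toFinset]
              exact if_congr (hcond v) rfl rfl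
            rw [this, Finset.sum_ite_mem, Finset.univ_inter, Finset.sum_const,
              nsmul_eq_mul]
            have hcard : ((detectorSet h r).toFinset.card : ℝ)
                = ((detectorSet h r).ncard : ℝ) := by
              rw [Set.ncard_eq_toFinset_card']
            rw [hcard]
            have hnz : ((detectorSet h r).ncard : ℝ) ≠ 0 := by
              have := (hne h hp)
              have hpos : 0 < (detectorSet h r).ncard := by
                rw [Set.ncard_pos (Set.toFinite _)]
                exact this
              positivity
            rw [mul_div_assoc', mul_div_cancel_left₀ _ hnz]
          · have : (spanningClosedWalkCount h.coe k : ℝ) = 0 := by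
              have : spanningClosedWalkCount h.coe k = 0 := by omega
              exact_mod_cast this
            simp [hp, this]
      _ = ∑ v : V, ∑ h : G.Subgraph,
            (if h ≤ ballSubgraph G v r ∧ v ∈ h.verts ∧ 0 < spanningClosedWalkCount h.coe k then
              (spanningClosedWalkCount h.coe k : ℝ) / ((detectorSet h r).ncard : ℝ) else 0) := Finset.sum_comm
      _ = ∑ v : V,
          ∑ᶠ h : {h : G.Subgraph //
              h ≤ ballSubgraph G v r ∧ v ∈ h.verts ∧ 0 < spanningClosedWalkCount h.coe k},
            (spanningClosedWalkCount h.1.coe k : ℝ) / ((detectorSet h.1 r).ncard : ℝ) := by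
          exact Finset.sum_congr rfl fun v _ => (rhs1 v).symm
  rw [key]
end
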